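/- Order ℕⁿ by the lexicographic order ⪯. Let R be a ring with an ideal 𝔪 such that ⋂_{i≥0} 𝔪^i = 0, R is complete with respect to the 𝔪-adic topology, and the quotient R/𝔪^i is finite for every i ≥ 0. Let T ⊆ ℕⁿ be an infinite set whose least upper bound with respect to ⪯ is an element α ∈ ℕⁿ with α ∉ T, and let (r_β)_{β∈T} be a family of elements of R. Then there exists an infinite subset T' ⊆ T whose least upper bound is also α, such that the subfamily (r_β)_{β∈T'} converges in R; that is, there exists r ∈ R such that for every N > 0 there is a finite subset S ⊆ T' with r − r_β ∈ 𝔪^N for all β ∈ T' ∖ S. -/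

import Mathlib

/-- Powers `𝔪^N` of a (left) ideal `𝔪` in a possibly noncommutative ring:
`𝔪^0 = R` and `𝔪^(N+1)` is the ideal generated by products `a * b` with
`a ∈ 𝔪`, `b ∈ 𝔪^N`. -/
def idealPow {R : Type*} [Ring R] (m : Ideal R) : ℕ → Ideal R
  | 0 => ⊤
  | N + 1 => Ideal.span {x | ∃ a ∈ m, ∃ b ∈ idealPow m N, x = a * b}

/-- The lexicographic order on `ℕⁿ`: `α ⪯ β` iff `α = β` or the leftmost nonzero entry of
`β - α` is positive, i.e. there is an index `i` with `α j = β j` for all `j < i` and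
`α i < β i`. -/
def lexLE {n : ℕ} (α β : Fin n → ℕ) : Prop :=
  α = β ∨ ∃ i : Fin n, (∀ j : Fin n, j < i → α j = β j) ∧ α i < β i

/-- The strict lexicographic order. -/
def lexLT {n : ℕ} (α β : Fin n → ℕ) : Prop :=
  ∃ i : Fin n, (∀ j : Fin n, j < i → α j = β j) ∧ α i < β i

lemma lexLE_def {n : ℕ} (a b : Fin n → ℕ) : lexLE a b ↔ a = b ∨ lexLT a b := Iff.rfl

lemma lexLE_refl {n : ℕ} (a : Fin n → ℕ) : lexLE a a := Or.inl rfl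

lemma lexLT_irrefl {n : ℕ} (a : Fin n → ℕ) : ¬ lexLT a a := by
  rintro ⟨i, -, h⟩
  exact lt_irrefl _ h

lemma lexLT_trans {n : ℕ} {a b c : Fin n → ℕ} (h1 : lexLT a b) (h2 : lexLT b c) :
    lexLT a c := by
  have := @IsTrans.trans (Lex (Fin n → ℕ)) (· < ·) _ (toLex a) (toLex b) (toLex c)
  exact this h1 h2

lemma lexLT_trichotomy {n : ℕ} (a b : Fin n → ℕ) : lexLT a b ∨ a = b ∨ lexLT b a := by
  have := (Pi.isTrichotomous_lex (· < · : Fin n → Fin n → Prop)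
    (fun {_} => (· < · : ℕ → ℕ → Prop)) (wellFounded_lt)).trichotomous a b
  by_cases h1 : lexLT a b
  · exact Or.inl h1
  by_cases h2 : lexLT b a
  · exact Or.inr (Or.inr h2)
  exact Or.inr (Or.inl (this h1 h2))

lemma lexLE_trans {n : ℕ} {a b c : Fin n → ℕ} (h1 : lexLE a b) (h2 : lexLE b c) :
    lexLE a c := by
  rcases h1 with rfl | h1
  · exact h2
  rcases h2 with rfl | h2
  · exact Or.inr h1
  · exact Or.inr (lexLT_trans h1 h2)

lemma lexLE_total {n : ℕ} (a b : Fin n → ℕ) : lexLE a b ∨ lexLE b a := by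
  rcases lexLT_trichotomy a b with h | rfl | h
  · exact Or.inl (Or.inr h)
  · exact Or.inl (lexLE_refl a)
  · exact Or.inr (Or.inr h)

lemma lexLT_of_not_lexLE {n : ℕ} {a b : Fin n → ℕ} (h : ¬ lexLE a b) : lexLT b a := by
  rcases lexLT_trichotomy a b with h1 | rfl | h1
  · exact absurd (Or.inr h1) h
  · exact absurd (lexLE_refl a) h
  · exact h1

lemma lexLE_lexLT_trans {n : ℕ} {a b c : Fin n → ℕ} (h1 : lexLE a b) (h2 : lexLT b c) :
    lexLT a c := by
  rcases h1 with rfl | h1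
  · exact h2
  · exact lexLT_trans h1 h2

lemma lexLT_lexLE_trans {n : ℕ} {a b c : Fin n → ℕ} (h1 : lexLT a b) (h2 : lexLE b c) :
    lexLT a c := by
  rcases h2 with rfl | h2
  · exact h1
  · exact lexLT_trans h1 h2

lemma lexLE_lexLT_asymm {n : ℕ} {a b : Fin n → ℕ} (h1 : lexLE a b) (h2 : lexLT b a) :
    False :=
  lexLT_irrefl a (lexLE_lexLT_trans h1 h2)

/-- A finite nonempty set has a lexicographic maximum. -/
lemma exists_lexLE_max {n : ℕ} {s : Set (Fin n → ℕ)} (h1 : s.Finite) :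
    s.Nonempty → ∃ b ∈ s, ∀ a ∈ s, lexLE a b := by
  refine Set.Finite.induction_on s h1 (fun h => absurd h (by simp)) ?_
  intro x s' _ _ ih _
  rcases s'.eq_empty_or_nonempty with rfl | hne
  · refine ⟨x, Set.mem_insert _ _, ?_⟩
    rintro a (rfl | ha)
    · exact lexLE_refl a
    · simp at ha
  · obtain ⟨b, hb, hmax⟩ := ih hne
    rcases lexLE_total x b with h | h
    · refine ⟨b, Set.mem_insert_of_mem _ hb, ?_⟩
      rintro a (rfl | ha)
      · exact h
      · exact hmax a ha
    · refine ⟨x, Set.mem_insert _ _, ?_⟩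
      rintro a (rfl | ha)
      · exact lexLE_refl a
      · exact lexLE_trans (hmax a ha) h

/-- A "good" subset: contained in `T`, infinite, and with least upper bound `α`. -/
def lexGood {n : ℕ} (T : Set (Fin n → ℕ)) (α : Fin n → ℕ) (S : Set (Fin n → ℕ)) : Prop :=
  S ⊆ T ∧ S.Infinite ∧ ∀ α' : Fin n → ℕ, (∀ β ∈ S, lexLE β α') → lexLE α α'

/-- Key pigeonhole step: a good set contains a good subset on which `r` is constant mod `I`. -/
lemma lexGood_step {n : ℕ} {R : Type*} [Ring R] (I : Ideal R) [Finite (R ⧸ I)]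
    (T : Set (Fin n → ℕ)) (α : Fin n → ℕ)
    (hαlt : ∀ β ∈ T, lexLT β α)
    (r : (Fin n → ℕ) → R) (S : Set (Fin n → ℕ)) (hS : lexGood T α S) :
    ∃ S', S' ⊆ S ∧ lexGood T α S' ∧ ∀ β ∈ S', ∀ γ ∈ S', r β - r γ ∈ I := by
  classical
  obtain ⟨hST, hSinf, hSlub⟩ := hS
  set Q : (Fin n → ℕ) → R ⧸ I := fun β => Submodule.Quotient.mk (r β) with hQ
  set C : (R ⧸ I) → Set (Fin n → ℕ) := fun c => {β ∈ S | Q β = c} with hC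
  have key : ∃ c, (C c).Infinite ∧ ∀ α' : Fin n → ℕ,
      (∀ β ∈ C c, lexLE β α') → lexLE α α' := by
    by_contra hcon
    push_neg at hcon
    obtain ⟨t0, ht0⟩ := hSinf.nonempty
    have hbound : ∀ c : R ⧸ I, ∃ b : Fin n → ℕ,
        lexLT b α ∧ ∀ β ∈ C c, lexLE β b := by
      intro c
      by_cases hc : (C c).Infinite
      · obtain ⟨α', hub', hnl⟩ := hcon c hc
        exact ⟨α', lexLT_of_not_lexLE hnl, hub'⟩
      · rw [Set.not_infinite] at hc
        rcases (C c).eq_empty_or_nonempty with he | hne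
        · refine ⟨t0, hαlt t0 (hST ht0), ?_⟩
          simp [he]
        · obtain ⟨b, hbmem, hbmax⟩ := exists_lexLE_max hc hne
          exact ⟨b, hαlt b (hST hbmem.1), hbmax⟩
    choose b hblt hbub using hbound
    obtain ⟨m, hm, hmax⟩ := exists_lexLE_max (Set.finite_range b) ⟨b (Q t0), ⟨Q t0, rfl⟩⟩
    have hmα : lexLT m α := by
      obtain ⟨c, rfl⟩ := hm
      exact hblt c
    have hubS : ∀ β ∈ S, lexLE β m := fun β hβ =>
      lexLE_trans (hbub (Q β) β ⟨hβ, rfl⟩) (hmax (b (Q β)) ⟨Q β, rfl⟩)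
    exact lexLE_lexLT_asymm (hSlub _ hubS) hmα
  obtain ⟨c, hcinf, hclub⟩ := key
  refine ⟨C c, fun β hβ => hβ.1, ⟨fun β hβ => hST hβ.1, hcinf, hclub⟩, ?_⟩
  intro β hβ γ hγ
  have h : Submodule.Quotient.mk (p := I) (r β) = Submodule.Quotient.mk (r γ) :=
    hβ.2.trans hγ.2.symm
  exact (Submodule.Quotient.eq I).mp h

/-- Order `ℕⁿ` lexicographically.  Let `R` be a ring with an ideal `𝔪` such
that `⋂ 𝔪^i = 0`, `R` is complete with respect to the `𝔪`-adic topology (every Cauchy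
sequence converges), and `R/𝔪^i` is finite for every `i`.  Let `T ⊆ ℕⁿ` be an infinite set
whose least upper bound is an element `α ∈ ℕⁿ` with `α ∉ T`, and let `(r_β)_{β ∈ T}` be a
family of elements of `R`.  Then there is an infinite subset `T' ⊆ T` whose least upper bound
is also `α`, such that the subfamily `(r_β)_{β ∈ T'}` converges in `R`: there is `l ∈ R`
such that for every `N > 0` there is a finite `S ⊆ T'` with `l - r_β ∈ 𝔪^N` for all
`β ∈ T' \ S`. -/
theorem statement5
    {n : ℕ} {R : Type*} [Ring R] (𝔪 : Ideal R)
    (hint : ∀ a : R, (∀ i : ℕ, a ∈ idealPow 𝔪 i) → a = 0)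
    (hcomplete : ∀ f : ℕ → R,
      (∀ N : ℕ, ∃ M : ℕ, ∀ i ≥ M, ∀ j ≥ M, f i - f j ∈ idealPow 𝔪 N) →
      ∃ l : R, ∀ N : ℕ, ∃ M : ℕ, ∀ i ≥ M, l - f i ∈ idealPow 𝔪 N)
    (hfin : ∀ i : ℕ, Finite (R ⧸ idealPow 𝔪 i))
    (T : Set (Fin n → ℕ)) (hTinf : T.Infinite)
    (α : Fin n → ℕ)
    (hub : ∀ β ∈ T, lexLE β α)
    (hlub : ∀ α' : Fin n → ℕ, (∀ β ∈ T, lexLE β α') → lexLE α α')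
    (hαT : α ∉ T)
    (r : (Fin n → ℕ) → R) :
    ∃ T' : Set (Fin n → ℕ), T' ⊆ T ∧ T'.Infinite ∧
      (∀ β ∈ T', lexLE β α) ∧
      (∀ α' : Fin n → ℕ, (∀ β ∈ T', lexLE β α') → lexLE α α') ∧
      ∃ l : R, ∀ N : ℕ, 0 < N →
        ∃ S : Set (Fin n → ℕ), S.Finite ∧ S ⊆ T' ∧
          ∀ β ∈ T' \ S, l - r β ∈ idealPow 𝔪 N := by
  classical
  have hαlt : ∀ β ∈ T, lexLT β α := by
    intro β hβ
    rcases hub β hβ with rfl | h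
    · exact absurd hβ hαT
    · exact h
  -- the descending chain of good sets
  have step : ∀ (N : ℕ) (S : Set (Fin n → ℕ)), lexGood T α S →
      ∃ S', S' ⊆ S ∧ lexGood T α S' ∧ ∀ β ∈ S', ∀ γ ∈ S', r β - r γ ∈ idealPow 𝔪 N := by
    intro N S hS
    haveI := hfin N
    exact lexGood_step (idealPow 𝔪 N) T α hαlt r S hS
  let g : ℕ → Set (Fin n → ℕ) → Set (Fin n → ℕ) := fun N S =>
    if h : lexGood T α S then (step N S h).choose else ∅
  have hstep : ∀ (N : ℕ) (S : Set (Fin n → ℕ)) (h : lexGood T α S),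
      g N S ⊆ S ∧ lexGood T α (g N S) ∧
        ∀ β ∈ g N S, ∀ γ ∈ g N S, r β - r γ ∈ idealPow 𝔪 N := by
    intro N S h
    simp only [g, dif_pos h]
    exact (step N S h).choose_spec
  let f : ℕ → Set (Fin n → ℕ) := fun N => Nat.rec T (fun N S => g (N + 1) S) N
  have hGoodT : lexGood T α T := ⟨fun _ h => h, hTinf, hlub⟩
  have hGood : ∀ N, lexGood T α (f N) := by
    intro N
    induction N with
    | zero => exact hGoodT
    | succ N ih => exact (hstep (N + 1) (f N) ih).2.1
  have hsub : ∀ N, f (N + 1) ⊆ f N := fun N => (hstep (N + 1) (f N) (hGood N)).1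
  have hcong : ∀ N, ∀ β ∈ f (N + 1), ∀ γ ∈ f (N + 1), r β - r γ ∈ idealPow 𝔪 (N + 1) :=
    fun N => (hstep (N + 1) (f N) (hGood N)).2.2
  have hmono : ∀ {N M : ℕ}, N ≤ M → f M ⊆ f N := by
    intro N M h
    induction h with
    | refl => exact fun x hx => hx
    | step _ ih => exact fun x hx => ih (hsub _ hx)
  -- enumerate T
  obtain ⟨e, he⟩ := (Set.to_countable T).exists_eq_range hTinf.nonempty
  -- pick a cofinal diagonal sequence
  have hpick : ∀ N, ∃ b, b ∈ f N ∧ ¬ lexLE b (e N) := by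
    intro N
    by_contra h
    push_neg at h
    have h1 : lexLE α (e N) := (hGood N).2.2 _ h
    have h2 : e N ∈ T := he ▸ Set.mem_range_self N
    exact lexLE_lexLT_asymm h1 (hαlt _ h2)
  choose b hbf hbe using hpick
  have hbT : ∀ N, b N ∈ T := fun N => (hGood N).1 (hbf N)
  have hT'lub : ∀ α' : Fin n → ℕ, (∀ x ∈ Set.range b, lexLE x α') → lexLE α α' := by
    intro α' h
    apply hlub
    intro β hβ
    rw [he] at hβ
    obtain ⟨N, rfl⟩ := hβ
    have h1 : lexLT (e N) (b N) := lexLT_of_not_lexLE (hbe N)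
    exact Or.inr (lexLT_lexLE_trans h1 (h _ ⟨N, rfl⟩))
  refine ⟨Set.range b, ?_, ?_, ?_, hT'lub, ?_⟩
  · rintro x ⟨N, rfl⟩
    exact hbT N
  · -- infiniteness
    by_contra h
    rw [Set.not_infinite] at h
    obtain ⟨m, hm, hmax⟩ := exists_lexLE_max h ⟨b 0, 0, rfl⟩
    have h1 : lexLE α m := hT'lub m hmax
    obtain ⟨N, rfl⟩ := hm
    exact lexLE_lexLT_asymm h1 (hαlt _ (hbT N))
  · rintro x ⟨N, rfl⟩
    exact hub _ (hbT N)
  · -- convergence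
    have hcauchy : ∀ N : ℕ, ∃ M : ℕ, ∀ i ≥ M, ∀ j ≥ M,
        r (b i) - r (b j) ∈ idealPow 𝔪 N := by
      intro N
      cases N with
      | zero => exact ⟨0, fun i _ j _ => Submodule.mem_top⟩
      | succ N =>
        exact ⟨N + 1, fun i hi j hj =>
          hcong N (b i) (hmono hi (hbf i)) (b j) (hmono hj (hbf j))⟩
    obtain ⟨l, hl⟩ := hcomplete (fun N => r (b N)) hcauchy
    refine ⟨l, ?_⟩
    intro N _
    obtain ⟨M, hM⟩ := hl N
    refine ⟨b '' Set.Iio M, (Set.finite_Iio M).image b, ?_, ?_⟩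
    · rintro x ⟨i, _, rfl⟩
      exact ⟨i, rfl⟩
    · rintro x ⟨⟨i, rfl⟩, hxS⟩
      have hiM : M ≤ i := by
        by_contra hlt
        push_neg at hlt
        exact hxS ⟨i, hlt, rfl⟩
      exact hM i hiM
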